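/- Lemma 8.9: with the recursively defined functions Γ^{l+2}_{2,2} and Γ^l_{1,1} of the Lauricella connection for block α (where Γ^l_{1,1} = −Σ_{σ≠α} Γ^{l(α)}_{1(σ)1(α)} depends on the block eigenvalues u^{1(σ)} only through the differences u^{1(α)} − u^{1(σ)}, and Γ^{l+2}_{2,2} is defined by the recursion of Lemma 8.8), the combination Γ^{(l+2)}_{2,2} − Γ^{l}_{1,1} does not depend on u^{1(σ)} for any σ ≠ α, i.e. ∂(Γ^{(l+2)}_{2,2} − Γ^l_{1,1})/∂u^{1(σ)} = 0 for all l ∈ {1,...,m_α − 2}. -/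
import Mathlib


/-- Partial derivative with respect to the leading eigenvalue coordinate `u^{1(σ)}` of
block `σ`, at the point `x = (eigenvalues, inner coordinates of block α)`. -/
noncomputable def pdEigen {r : ℕ} (σ : Fin r)
    (f : (Fin r → ℝ) × (ℕ → ℝ) → ℝ) (x : (Fin r → ℝ) × (ℕ → ℝ)) : ℝ :=
  deriv (fun t => f (Function.update x.1 σ t, x.2)) (x.1 σ)

/-- **Lemma 8.9.** For the recursively defined Christoffel symbols
`G σ k = Γ^{k(α)}_{1(σ)1(α)}` (σ ≠ α), `GA k = Γ^{k(α)}_{1(α)1(α)} = −Σ_{σ≠α} G σ k`,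
and `D n = Γ^{n(α)}_{2(α)2(α)}` given by the recursion of Lemma 8.8, the combination
`Γ^{(l+2)(α)}_{2(α)2(α)} − Γ^{l(α)}_{1(α)1(α)}` does not depend on `u^{1(σ)}` for any
`σ ≠ α`, for all `l ∈ {1,…,m_α − 2}`. -/
theorem statement12 (r : ℕ) (α : Fin r) (m : Fin r → ℕ) (ε : Fin r → ℝ)
    (G : Fin r → ℕ → ((Fin r → ℝ) × (ℕ → ℝ)) → ℝ)
    (hG1 : ∀ σ, σ ≠ α → ∀ x, G σ 1 x = (m σ : ℝ) * ε σ / (x.1 α - x.1 σ))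
    (hGrec : ∀ σ, σ ≠ α → ∀ k : ℕ, 1 ≤ k → ∀ x,
      G σ (k + 1) x
        = -(1 / (x.1 α - x.1 σ)) * ∑ s ∈ Finset.Icc 2 (k + 1), G σ (k + 2 - s) x * x.2 s)
    (GA : ℕ → ((Fin r → ℝ) × (ℕ → ℝ)) → ℝ)
    (hGA : ∀ k x, GA k x = -∑ σ ∈ Finset.univ.erase α, G σ k x)
    (D : ℕ → ((Fin r → ℝ) × (ℕ → ℝ)) → ℝ)
    (hD2 : ∀ x, D 2 x = -((m α : ℝ) * ε α) / x.2 2)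
    (hDrec : ∀ n : ℕ, 3 ≤ n → ∀ x,
      D n x = GA (n - 2) x - D 2 x * x.2 n / x.2 2
        - (1 / x.2 2) * ∑ l ∈ Finset.Icc 1 (n - 3), (D (l + 2) x - GA l x) * x.2 (n - l)) :
    ∀ σ, σ ≠ α → ∀ l : ℕ, 1 ≤ l → l ≤ m α - 2 →
      ∀ x : (Fin r → ℝ) × (ℕ → ℝ), x.2 2 ≠ 0 → (∀ τ, τ ≠ α → x.1 α ≠ x.1 τ) →
        pdEigen σ (fun y => D (l + 2) y - GA l y) x = 0 := by
  have key : ∀ l : ℕ, 1 ≤ l → ∀ x y : (Fin r → ℝ) × (ℕ → ℝ), x.2 = y.2 →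
      D (l + 2) x - GA l x = D (l + 2) y - GA l y := by
    intro l
    induction l using Nat.strong_induction_on with
    | _ l ih =>
      intro hl x y hxy
      have hx := hDrec (l + 2) (by omega) x
      have hy := hDrec (l + 2) (by omega) y
      rw [show l + 2 - 2 = l from by omega, show l + 2 - 3 = l - 1 from by omega] at hx hy
      have ex : D (l + 2) x - GA l x
          = -(D 2 x * x.2 (l + 2) / x.2 2)
            - (1 / x.2 2) * ∑ j ∈ Finset.Icc 1 (l - 1), (D (j + 2) x - GA j x) * x.2 (l + 2 - j) := by
        rw [hx]; ring
      have ey : D (l + 2) y - GA l y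
          = -(D 2 y * y.2 (l + 2) / y.2 2)
            - (1 / y.2 2) * ∑ j ∈ Finset.Icc 1 (l - 1), (D (j + 2) y - GA j y) * y.2 (l + 2 - j) := by
        rw [hy]; ring
      rw [ex, ey, hD2 x, hD2 y, hxy]
      congr 1
      congr 1
      refine Finset.sum_congr rfl ?_
      intro j hj
      simp only [Finset.mem_Icc] at hj
      rw [ih j (by omega) (by omega) x y hxy]
  intro σ hσ l hl _ x _ _
  unfold pdEigen
  have : (fun t => D (l + 2) (Function.update x.1 σ t, x.2) - GA l (Function.update x.1 σ t, x.2))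
      = fun _ => D (l + 2) x - GA l x := by
    funext t
    exact key l hl (Function.update x.1 σ t, x.2) x rfl
  rw [this, deriv_const]
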